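/- For n ≥ 1, the number of subgraphs H of the complete DAG K_{n+1} with vertex set exactly {1, ..., n+1} such that H is connected and every vertex lies on a directed path from 1 to n+1 equals sum_{m=0}^{n-1} (-1)^m · π_{n-m} · h_m(2^1 - 1, 2^2 - 1, ..., 2^{n-m} - 1), where π_k = prod_{i=1}^{k} (2^i - 1). -/

import Mathlib

/-- The complete homogeneous symmetric polynomial `h_m(x_1, …, x_k)` (evaluated in `ℤ`):
the sum over all monomials of degree `m` in `x_1, …, x_k`. -/
def hfull (k m : ℕ) (x : Fin k → ℤ) : ℤ :=
  ∑ d ∈ Finset.Nat.antidiagonalTuple k m, ∏ i, x i ^ d i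

open Finset


lemma hfull_zero_right (k : ℕ) (x : Fin k → ℤ) : hfull k 0 x = 1 := by
  simp [hfull, Finset.Nat.antidiagonalTuple_zero_right]

lemma hfull_zero_left (m : ℕ) (x : Fin 0 → ℤ) : hfull 0 (m+1) x = 0 := by
  simp [hfull, Finset.Nat.antidiagonalTuple_zero_succ]

lemma hfull_of_val (k k' m : ℕ) (h : k = k') (g : ℕ → ℤ) :
    hfull k m (fun i => g i.val) = hfull k' m (fun i => g i.val) := by subst h; rfl

lemma hfull_succ (k m : ℕ) (x : Fin (k+1) → ℤ) :
    hfull (k+1) (m+1) x = hfull k (m+1) (x ∘ Fin.succ) + x 0 * hfull (k+1) m x := by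
  classical
  rw [hfull, ← Finset.sum_filter_add_sum_filter_not _ (fun d => d 0 = 0)]
  congr 1
  · rw [hfull]
    refine Finset.sum_nbij' (fun d => Fin.tail d) (fun d => Fin.cons 0 d) ?_ ?_ ?_ ?_ ?_
    · intro d hd
      simp only [mem_filter, Finset.Nat.mem_antidiagonalTuple] at hd
      rw [Finset.Nat.mem_antidiagonalTuple]
      rw [← hd.1, Fin.sum_univ_succ]
      simp [hd.2, Fin.tail]
    · intro d hd
      rw [Finset.Nat.mem_antidiagonalTuple] at hd
      simp only [mem_filter, Finset.Nat.mem_antidiagonalTuple]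
      rw [Fin.sum_univ_succ]
      simp [hd]
    · intro d hd
      simp only [mem_filter] at hd
      funext i
      refine Fin.cases ?_ (fun j => ?_) i
      · simp [hd.2]
      · simp [Fin.tail]
    · intro d _; exact Fin.tail_cons _ _
    · intro d hd
      simp only [mem_filter] at hd
      rw [Fin.prod_univ_succ, hd.2]
      simp [Fin.tail, Function.comp]
  · rw [hfull, Finset.mul_sum]
    refine Finset.sum_nbij' (fun d => Fin.cons (d 0 - 1) (Fin.tail d))
      (fun d => Fin.cons (d 0 + 1) (Fin.tail d)) ?_ ?_ ?_ ?_ ?_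
    · intro d hd
      simp only [mem_filter, Finset.Nat.mem_antidiagonalTuple] at hd
      rw [Finset.Nat.mem_antidiagonalTuple, Fin.sum_univ_succ]
      have h0 : 1 ≤ d 0 := Nat.one_le_iff_ne_zero.2 hd.2
      have := hd.1
      rw [Fin.sum_univ_succ] at this
      simp only [Fin.cons_zero, Fin.cons_succ]
      have ht : ∑ i : Fin k, Fin.tail d i = ∑ i : Fin k, d i.succ := rfl
      omega
    · intro d hd
      rw [Finset.Nat.mem_antidiagonalTuple] at hd
      simp only [mem_filter, Finset.Nat.mem_antidiagonalTuple]
      rw [Fin.sum_univ_succ] at hd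
      rw [Fin.sum_univ_succ]
      simp only [Fin.cons_zero, Fin.cons_succ]
      have ht : ∑ i : Fin k, Fin.tail d i = ∑ i : Fin k, d i.succ := rfl
      constructor
      · omega
      · simp
    · intro d hd
      simp only [mem_filter] at hd
      have h0 : 1 ≤ d 0 := Nat.one_le_iff_ne_zero.2 hd.2
      funext i
      refine Fin.cases ?_ (fun j => ?_) i
      · simp; omega
      · simp [Fin.tail]
    · intro d _
      funext i
      refine Fin.cases ?_ (fun j => ?_) i
      · simp
      · simp [Fin.tail]
    · intro d hd
      simp only [mem_filter, Finset.Nat.mem_antidiagonalTuple] at hd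
      have h0 : 1 ≤ d 0 := Nat.one_le_iff_ne_zero.2 hd.2
      rw [Fin.prod_univ_succ, Fin.prod_univ_succ]
      simp only [Fin.cons_zero, Fin.cons_succ]
      have : x 0 ^ d 0 = x 0 * x 0 ^ (d 0 - 1) := by
        conv_lhs => rw [show d 0 = (d 0 - 1) + 1 by omega]
        ring
      rw [this]
      simp [Fin.tail, mul_assoc]


def Lsum (n : ℕ) (x : ℕ → ℤ) : ℤ :=
  ∑ T ∈ (Finset.Ico 1 n).powerset,
    (-1 : ℤ)^T.card * ∏ i ∈ Finset.range n, x ((Finset.Ico (i+1) (n+1) \ T).card)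

lemma Lsum_one (x : ℕ → ℤ) : Lsum 1 x = x 1 := by
  simp [Lsum]

lemma Lsum_rec (n : ℕ) (hn : 1 ≤ n) (x : ℕ → ℤ) :
    Lsum (n+1) x = x 1 * (Lsum n (fun j => x (j+1)) - Lsum n x) := by
  classical
  have hIco : Finset.Ico 1 (n+1) = insert n (Finset.Ico 1 n) := by
    ext a; simp [Finset.mem_Ico, Finset.mem_insert]; omega
  have hnot : n ∉ Finset.Ico 1 n := by simp
  rw [Lsum, hIco, Finset.sum_powerset_insert hnot]
  have key1 : ∀ T ∈ (Finset.Ico 1 n).powerset,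
      (-1 : ℤ)^T.card * ∏ i ∈ Finset.range (n+1), x ((Finset.Ico (i+1) (n+2) \ T).card)
      = x 1 * ((-1 : ℤ)^T.card *
          ∏ i ∈ Finset.range n, x (((Finset.Ico (i+1) (n+1) \ T).card) + 1)) := by
    intro T hT
    rw [Finset.mem_powerset] at hT
    have hTn : ∀ a ∈ T, a < n := fun a ha => (Finset.mem_Ico.1 (hT ha)).2
    rw [Finset.prod_range_succ]
    have h1 : (Finset.Ico (n+1) (n+2) \ T).card = 1 := by
      have : Finset.Ico (n+1) (n+2) \ T = {n+1} := by
        ext a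
        simp only [Finset.mem_sdiff, Finset.mem_Ico, Finset.mem_singleton]
        constructor
        · rintro ⟨h, _⟩; omega
        · rintro rfl; exact ⟨by omega, fun h => by have := hTn _ h; omega⟩
      rw [this, Finset.card_singleton]
    rw [h1]
    have h2 : ∀ i ∈ Finset.range n,
        (Finset.Ico (i+1) (n+2) \ T).card = (Finset.Ico (i+1) (n+1) \ T).card + 1 := by
      intro i hi
      rw [Finset.mem_range] at hi
      have : Finset.Ico (i+1) (n+2) \ T = insert (n+1) (Finset.Ico (i+1) (n+1) \ T) := by
        ext a
        simp only [Finset.mem_sdiff, Finset.mem_Ico, Finset.mem_insert]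
        constructor
        · rintro ⟨h, ha⟩
          rcases Nat.lt_or_ge a (n+1) with h'|h'
          · exact Or.inr ⟨⟨h.1, h'⟩, ha⟩
          · left; omega
        · rintro (rfl | ⟨h, ha⟩)
          · exact ⟨⟨by omega, by omega⟩, fun h => by have := hTn _ h; omega⟩
          · exact ⟨⟨h.1, by omega⟩, ha⟩
      rw [this, Finset.card_insert_of_notMem (by simp [Finset.mem_Ico])]
    rw [Finset.prod_congr rfl fun i hi => by rw [h2 i hi]]
    ring
  have key2 : ∀ T ∈ (Finset.Ico 1 n).powerset,
      (-1 : ℤ)^(insert n T).card *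
        ∏ i ∈ Finset.range (n+1), x ((Finset.Ico (i+1) (n+2) \ insert n T).card)
      = -(x 1 * ((-1 : ℤ)^T.card *
          ∏ i ∈ Finset.range n, x ((Finset.Ico (i+1) (n+1) \ T).card))) := by
    intro T hT
    rw [Finset.mem_powerset] at hT
    have hTn : ∀ a ∈ T, a < n := fun a ha => (Finset.mem_Ico.1 (hT ha)).2
    have hnT : n ∉ T := fun h => by have := hTn _ h; omega
    rw [Finset.card_insert_of_notMem hnT, Finset.prod_range_succ]
    have h1 : (Finset.Ico (n+1) (n+2) \ insert n T).card = 1 := by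
      have : Finset.Ico (n+1) (n+2) \ insert n T = {n+1} := by
        ext a
        simp only [Finset.mem_sdiff, Finset.mem_Ico, Finset.mem_singleton, Finset.mem_insert]
        constructor
        · rintro ⟨h, _⟩; omega
        · rintro rfl
          refine ⟨by omega, ?_⟩
          rintro (h | h)
          · omega
          · have := hTn _ h; omega
      rw [this, Finset.card_singleton]
    rw [h1]
    have h2 : ∀ i ∈ Finset.range n,
        (Finset.Ico (i+1) (n+2) \ insert n T).card = (Finset.Ico (i+1) (n+1) \ T).card := by
      intro i hi
      rw [Finset.mem_range] at hi
      have : Finset.Ico (i+1) (n+2) \ insert n T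
          = insert (n+1) ((Finset.Ico (i+1) (n+1) \ T).erase n) := by
        ext a
        simp only [Finset.mem_sdiff, Finset.mem_Ico, Finset.mem_insert, Finset.mem_erase]
        constructor
        · rintro ⟨h, ha⟩
          push_neg at ha
          rcases Nat.lt_or_ge a (n+1) with h'|h'
          · exact Or.inr ⟨ha.1, ⟨h.1, h'⟩, ha.2⟩
          · left; omega
        · rintro (rfl | ⟨hne, h, ha⟩)
          · refine ⟨⟨by omega, by omega⟩, ?_⟩
            push_neg
            exact ⟨by omega, fun h => by have := hTn _ h; omega⟩
          · refine ⟨⟨h.1, by omega⟩, ?_⟩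
            push_neg
            exact ⟨hne, ha⟩
      rw [this, Finset.card_insert_of_notMem (by simp [Finset.mem_Ico]),
        Finset.card_erase_of_mem, Nat.sub_add_cancel]
      · have : n ∈ Finset.Ico (i+1) (n+1) \ T := by
          simp only [Finset.mem_sdiff, Finset.mem_Ico]
          exact ⟨⟨by omega, by omega⟩, hnT⟩
        exact Finset.card_pos.2 ⟨n, this⟩
      · simp only [Finset.mem_sdiff, Finset.mem_Ico]
        exact ⟨⟨by omega, by omega⟩, hnT⟩
    rw [Finset.prod_congr rfl fun i hi => by rw [h2 i hi]]
    ring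
  have hL : Lsum n (fun j => x (j+1)) = ∑ T ∈ (Finset.Ico 1 n).powerset,
      (-1:ℤ)^T.card * ∏ i ∈ Finset.range n, x ((Finset.Ico (i+1) (n+1) \ T).card + 1) := rfl
  rw [Finset.sum_congr rfl key1, Finset.sum_congr rfl key2, ← Finset.mul_sum,
    Finset.sum_neg_distrib, ← Finset.mul_sum, hL, Lsum]
  ring


def Rsum (n : ℕ) (x : ℕ → ℤ) : ℤ :=
  ∑ m ∈ Finset.range n,
    (-1 : ℤ)^m * (∏ i ∈ Finset.Icc 1 (n-m), x i) * hfull (n-m) m (fun i => x (i.val+1))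

lemma Rsum_one (x : ℕ → ℤ) : Rsum 1 x = x 1 := by
  simp [Rsum, hfull_zero_right]

lemma Rsum_rec (n : ℕ) (hn : 1 ≤ n) (x : ℕ → ℤ) :
    Rsum (n+1) x = x 1 * (Rsum n (fun j => x (j+1)) - Rsum n x) := by
  classical
  rw [Rsum, Finset.sum_range_succ']
  -- m = 0 term: (-1)^0 * P(n+1) * hfull (n+1) 0
  have h0 : (-1:ℤ)^0 * (∏ i ∈ Finset.Icc 1 (n+1-0), x i) * hfull (n+1-0) 0 (fun i => x (i.val+1))
      = ∏ i ∈ Finset.Icc 1 (n+1), x i := by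
    rw [hfull_zero_right]; ring_nf; rfl
  -- for m ∈ range n : term (m+1)
  have hterm : ∀ m ∈ Finset.range n,
      (-1:ℤ)^(m+1) * (∏ i ∈ Finset.Icc 1 (n+1-(m+1)), x i) *
        hfull (n+1-(m+1)) (m+1) (fun i => x (i.val+1))
      = ((-1:ℤ)^(m+1) * (∏ i ∈ Finset.Icc 1 (n-m), x i) *
          hfull (n-m-1) (m+1) (fun i => x (i.val+2)))
        + ((-1:ℤ)^(m+1) * x 1 * (∏ i ∈ Finset.Icc 1 (n-m), x i) *
            hfull (n-m) m (fun i => x (i.val+1))) := by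
    intro m hm
    rw [Finset.mem_range] at hm
    have e1 : n + 1 - (m+1) = n - m := by omega
    have e2 : n - m = (n - m - 1) + 1 := by omega
    rw [e1, hfull_of_val (n-m) ((n-m-1)+1) (m+1) e2 (fun j => x (j+1)), hfull_succ]
    have hc : ((fun i : Fin ((n-m-1)+1) => x (i.val+1)) ∘ Fin.succ)
        = fun i : Fin (n-m-1) => x (i.val+2) := by
      funext i; rfl
    rw [hc]
    have hh : hfull ((n-m-1)+1) m (fun i => x (i.val+1))
        = hfull (n-m) m (fun i => x (i.val+1)) :=
      hfull_of_val _ _ _ e2.symm (fun j => x (j+1))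
    rw [hh]
    simp only [Fin.val_zero]
    ring
  rw [Finset.sum_congr rfl hterm, Finset.sum_add_distrib, h0]
  -- second piece: x1-part equals -(x 1 * Rsum n x)
  have hpart2 : ∑ m ∈ Finset.range n, ((-1:ℤ)^(m+1) * x 1 * (∏ i ∈ Finset.Icc 1 (n-m), x i) *
      hfull (n-m) m (fun i => x (i.val+1))) = -(x 1 * Rsum n x) := by
    rw [Rsum, Finset.mul_sum, ← Finset.sum_neg_distrib]
    refine Finset.sum_congr rfl fun m hm => ?_
    ring
  -- first piece plus the m=0 term equals x 1 * Rsum n (shift x)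
  have hpart1 : (∑ m ∈ Finset.range n, ((-1:ℤ)^(m+1) * (∏ i ∈ Finset.Icc 1 (n-m), x i) *
      hfull (n-m-1) (m+1) (fun i => x (i.val+2))))
      + ∏ i ∈ Finset.Icc 1 (n+1), x i
      = x 1 * Rsum n (fun j => x (j+1)) := by
    obtain ⟨p, rfl⟩ : ∃ p, n = p + 1 := ⟨n-1, by omega⟩
    have hshift : ∀ k : ℕ, x 1 * ∏ i ∈ Finset.Icc 1 k, x (i+1) = ∏ i ∈ Finset.Icc 1 (k+1), x i := by
      intro k
      have himg : (Finset.Icc 1 k).image (· + 1) = Finset.Icc 2 (k+1) := by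
        ext a
        simp only [Finset.mem_image, Finset.mem_Icc]
        constructor
        · rintro ⟨b, hb, rfl⟩; omega
        · intro h; exact ⟨a-1, by omega, by omega⟩
      have : ∏ i ∈ Finset.Icc 1 k, x (i+1) = ∏ i ∈ Finset.Icc 2 (k+1), x i := by
        rw [← himg, Finset.prod_image (by intro a _ b _ h; simp only at h; omega)]
      rw [this]
      have hins : Finset.Icc 1 (k+1) = insert 1 (Finset.Icc 2 (k+1)) := by
        ext a; simp [Finset.mem_Icc, Finset.mem_insert]; omega
      rw [hins, Finset.prod_insert (by simp)]
    -- RHS expansion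
    have hR : Rsum (p+1) (fun j => x (j+1)) =
        (∑ m ∈ Finset.range p, (-1:ℤ)^(m+1) * (∏ i ∈ Finset.Icc 1 (p-m), x (i+1)) *
          hfull (p-m) (m+1) (fun i => x (i.val+2)))
        + (∏ i ∈ Finset.Icc 1 (p+1), x (i+1)) := by
      rw [Rsum, Finset.sum_range_succ']
      congr 1
      · refine Finset.sum_congr rfl fun m hm => ?_
        have e : p + 1 - (m + 1) = p - m := by omega
        rw [e]
      · rw [hfull_zero_right]
        simp
    rw [hR, Finset.sum_range_succ]
    -- last term of LHS vanishes
    have hlast : (-1:ℤ)^(p+1) * (∏ i ∈ Finset.Icc 1 (p+1-p), x i) *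
        hfull (p+1-p-1) (p+1) (fun i => x (i.val+2)) = 0 := by
      have e : p+1-p-1 = 0 := by omega
      rw [hfull_of_val _ _ _ e (fun j => x (j+2)), hfull_zero_left]
      ring
    rw [hlast, add_zero, mul_add, Finset.mul_sum, hshift (p+1)]
    congr 1
    refine Finset.sum_congr rfl fun m hm => ?_
    rw [Finset.mem_range] at hm
    have e : p+1-m-1 = p-m := by omega
    rw [hfull_of_val _ _ _ e (fun j => x (j+2))]
    have e2 : p+1-m = (p-m)+1 := by omega
    rw [e2, ← hshift (p-m)]
    ring
  rw [add_right_comm, hpart1, hpart2]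
  ring


section PredEquiv
variable {n : ℕ}

lemma pred_iff (hn : 1 ≤ n) (H : Finset (Fin (n+1) × Fin (n+1))) :
    ((∀ e ∈ H, e.1 < e.2) ∧
        (∀ v : Fin (n + 1), ∃ e ∈ H, e.1 = v ∨ e.2 = v) ∧
        (∀ u v : Fin (n + 1),
          Relation.ReflTransGen (fun a b => (a, b) ∈ H ∨ (b, a) ∈ H) u v) ∧
        ∀ v : Fin (n + 1),
          Relation.ReflTransGen (fun u w => (u, w) ∈ H) 0 v ∧
          Relation.ReflTransGen (fun u w => (u, w) ∈ H) v (Fin.last n)) ↔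
    ((∀ e ∈ H, e.1 < e.2) ∧ (∀ v : Fin (n+1), v ≠ 0 → ∃ u, (u, v) ∈ H) ∧
      (∀ v : Fin (n+1), v ≠ Fin.last n → ∃ w, (v, w) ∈ H)) := by
  constructor
  · rintro ⟨h1, h2, h3, h4⟩
    refine ⟨h1, ?_, ?_⟩
    · intro v hv
      rcases (h4 v).1.cases_tail with h | ⟨c, _, hc⟩
      · exact absurd h hv
      · exact ⟨c, hc⟩
    · intro v hv
      rcases (h4 v).2.cases_head with h | ⟨c, hc, _⟩
      · exact absurd h hv
      · exact ⟨c, hc⟩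
  · rintro ⟨h1, h2, h3⟩
    have reach0 : ∀ v, Relation.ReflTransGen (fun u w : Fin (n+1) => (u, w) ∈ H) 0 v := by
      have key : ∀ k, ∀ v : Fin (n+1), v.val < k →
          Relation.ReflTransGen (fun u w => (u, w) ∈ H) 0 v := by
        intro k
        induction k with
        | zero => intro v hv; omega
        | succ k ih =>
          intro v hv
          by_cases h0 : v = 0
          · subst h0; exact Relation.ReflTransGen.refl
          · obtain ⟨u, hu⟩ := h2 v h0
            have hlt : u.val < v.val := Fin.lt_def.mp (h1 (u, v) hu)
            exact (ih u (by omega)).tail hu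
      exact fun v => key (n+1) v v.isLt
    have reachL : ∀ v, Relation.ReflTransGen (fun u w : Fin (n+1) => (u, w) ∈ H) v (Fin.last n) := by
      have key : ∀ k, ∀ v : Fin (n+1), n - v.val < k →
          Relation.ReflTransGen (fun u w => (u, w) ∈ H) v (Fin.last n) := by
        intro k
        induction k with
        | zero => intro v hv; omega
        | succ k ih =>
          intro v hv
          by_cases h0 : v = Fin.last n
          · subst h0; exact Relation.ReflTransGen.refl
          · obtain ⟨w, hw⟩ := h3 v h0
            have hlt : v.val < w.val := Fin.lt_def.mp (h1 (v, w) hw)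
            have hvn : v.val < n := by
              have := w.isLt
              omega
            exact Relation.ReflTransGen.head hw (ih w (by omega))
      exact fun v => key (n+1) v (by omega)
    refine ⟨h1, ?_, ?_, fun v => ⟨reach0 v, reachL v⟩⟩
    · intro v
      by_cases h0 : v = 0
      · subst h0
        have hne : (0 : Fin (n+1)) ≠ Fin.last n := by
          intro h
          have := congrArg Fin.val h
          simp [Fin.last] at this
          omega
        obtain ⟨w, hw⟩ := h3 0 hne
        exact ⟨(0, w), hw, Or.inl rfl⟩
      · obtain ⟨u, hu⟩ := h2 v h0
        exact ⟨(u, v), hu, Or.inr rfl⟩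
    · intro u v
      have hsym : Symmetric (fun a b : Fin (n+1) => (a, b) ∈ H ∨ (b, a) ∈ H) :=
        fun a b h => h.symm
      have mono : ∀ a b : Fin (n+1), Relation.ReflTransGen (fun u w => (u, w) ∈ H) a b →
          Relation.ReflTransGen (fun a b => (a, b) ∈ H ∨ (b, a) ∈ H) a b :=
        fun a b h => Relation.ReflTransGen.mono (fun _ _ h => Or.inl h) a b h
      exact ((@Relation.ReflTransGen.stdSymm _ _ ⟨fun a b h => hsym h⟩).symm _ _ (mono _ _ (reach0 u))).trans
        (mono _ _ (reach0 v))

end PredEquiv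

def predF (n : ℕ) (f : Fin (n+1) → Finset (Fin (n+1))) : Prop :=
  (∀ i, ∀ j ∈ f i, i < j) ∧ (∀ i, i ≠ Fin.last n → (f i).Nonempty) ∧
    (∀ j : Fin (n+1), j ≠ 0 → ∃ i, j ∈ f i)

lemma card_HF (n : ℕ) :
    Nat.card {H : Finset (Fin (n+1) × Fin (n+1)) //
      (∀ e ∈ H, e.1 < e.2) ∧ (∀ v : Fin (n+1), v ≠ 0 → ∃ u, (u, v) ∈ H) ∧
        (∀ v : Fin (n+1), v ≠ Fin.last n → ∃ w, (v, w) ∈ H)}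
    = Nat.card {f : Fin (n+1) → Finset (Fin (n+1)) // predF n f} := by
  classical
  apply Nat.card_congr
  refine ⟨fun H => ⟨fun i => Finset.univ.filter (fun j => (i, j) ∈ H.1), ?_⟩,
          fun f => ⟨Finset.univ.filter (fun e => e.2 ∈ f.1 e.1), ?_⟩, ?_, ?_⟩
  · obtain ⟨H, h1, h2, h3⟩ := H
    refine ⟨fun i j hj => ?_, fun i hi => ?_, fun j hj => ?_⟩
    · simp only [Finset.mem_filter] at hj
      exact h1 (i, j) hj.2
    · obtain ⟨w, hw⟩ := h3 i hi
      exact ⟨w, by simp [hw]⟩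
    · obtain ⟨u, hu⟩ := h2 j hj
      exact ⟨u, by simp [hu]⟩
  · obtain ⟨f, h1, h2, h3⟩ := f
    refine ⟨fun e he => ?_, fun v hv => ?_, fun v hv => ?_⟩
    · simp only [Finset.mem_filter] at he
      exact h1 e.1 e.2 he.2
    · obtain ⟨u, hu⟩ := h3 v hv
      exact ⟨u, by simp [hu]⟩
    · obtain ⟨w, hw⟩ := h2 v hv
      exact ⟨w, by simp [hw]⟩
  · rintro ⟨H, hH⟩
    apply Subtype.ext
    simp only
    ext e
    simp
  · rintro ⟨f, hf⟩
    apply Subtype.ext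
    simp only
    funext i
    ext j
    simp

lemma card_F_eq (n : ℕ) (hn : 1 ≤ n) :
    (Nat.card {f : Fin (n+1) → Finset (Fin (n+1)) // predF n f} : ℤ)
      = Lsum n (fun c => (2:ℤ)^c - 1) := by
  classical
  rw [Nat.card_eq_fintype_card, Fintype.card_subtype]
  set A : Finset (Fin (n+1) → Finset (Fin (n+1))) :=
    Finset.univ.filter (fun f => (∀ i, ∀ j ∈ f i, i < j) ∧
      (∀ i, i ≠ Fin.last n → (f i).Nonempty)) with hA
  -- Step B : inclusion-exclusion
  have stepB : ((Finset.univ.filter (predF n)).card : ℤ)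
      = ∑ T ∈ (Finset.Ioi (0:Fin (n+1))).powerset,
          (-1:ℤ)^T.card * ((A.filter (fun f => ∀ i, ∀ j ∈ f i, j ∉ T)).card : ℤ) := by
    have h1 : ∀ T ∈ (Finset.Ioi (0:Fin (n+1))).powerset,
        (-1:ℤ)^T.card * ((A.filter (fun f => ∀ i, ∀ j ∈ f i, j ∉ T)).card : ℤ)
        = ∑ f ∈ A, (if (∀ i, ∀ j ∈ f i, j ∉ T) then ((-1:ℤ)^T.card) else 0) := by
      intro T _
      rw [← Finset.sum_boole, Finset.mul_sum]
      refine Finset.sum_congr rfl fun f _ => ?_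
      by_cases h : (∀ i, ∀ j ∈ f i, j ∉ T) <;> simp [h]
    rw [Finset.sum_congr rfl h1, Finset.sum_comm]
    have h2 : ∀ f ∈ A,
        (∑ T ∈ (Finset.Ioi (0:Fin (n+1))).powerset,
          (if (∀ i, ∀ j ∈ f i, j ∉ T) then ((-1:ℤ)^T.card) else 0))
        = (if (∀ j : Fin (n+1), j ≠ 0 → ∃ i, j ∈ f i) then (1:ℤ) else 0) := by
      intro f _
      set U : Finset (Fin (n+1)) := (Finset.Ioi (0:Fin (n+1))).filter (fun j => ∀ i, j ∉ f i) with hU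
      have hiff : ∀ T ∈ (Finset.Ioi (0:Fin (n+1))).powerset,
          ((∀ i, ∀ j ∈ f i, j ∉ T) ↔ T ⊆ U) := by
        intro T hT
        rw [Finset.mem_powerset] at hT
        constructor
        · intro h j hj
          rw [hU, Finset.mem_filter]
          exact ⟨hT hj, fun i hji => h i j hji hj⟩
        · intro h i j hji hjT
          have := h hjT
          rw [hU, Finset.mem_filter] at this
          exact this.2 i hji
      rw [Finset.sum_congr rfl (fun T hT => by rw [if_congr (hiff T hT) rfl rfl])]
      rw [← Finset.sum_filter]
      have hps : (Finset.Ioi (0:Fin (n+1))).powerset.filter (· ⊆ U) = U.powerset := by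
        ext T
        simp only [Finset.mem_filter, Finset.mem_powerset]
        constructor
        · exact fun h => h.2
        · intro h
          exact ⟨h.trans (Finset.filter_subset _ _), h⟩
      rw [hps, Finset.sum_powerset_neg_one_pow_card]
      congr 1
      rw [eq_iff_iff]
      rw [Finset.filter_eq_empty_iff]
      constructor
      · intro h j hj
        have := h (Finset.mem_Ioi.mpr (Fin.pos_iff_ne_zero.mpr hj))
        push_neg at this
        exact this
      · intro h j hj
        push_neg
        exact h j (Fin.pos_iff_ne_zero.mp (Finset.mem_Ioi.mp hj))
    rw [Finset.sum_congr rfl h2, Finset.sum_boole]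
    congr 1
    rw [hA, Finset.filter_filter]
    apply congrArg
    apply Finset.filter_congr
    intro f _
    unfold predF
    tauto
  -- Step C : product formula for each T
  have stepC : ∀ T : Finset (Fin (n+1)),
      ((A.filter (fun f => ∀ i, ∀ j ∈ f i, j ∉ T)).card : ℤ)
      = ∏ i : Fin (n+1), (if i = Fin.last n then 1 else (2:ℤ)^((Finset.Ioi i \ T).card) - 1) := by
    intro T
    have hpi : A.filter (fun f => ∀ i, ∀ j ∈ f i, j ∉ T)
        = Fintype.piFinset (fun i : Fin (n+1) => ((Finset.Ioi i \ T).powerset).filter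
            (fun s => i ≠ Fin.last n → s.Nonempty)) := by
      ext f
      simp only [hA, Finset.mem_filter, Finset.mem_univ, true_and,
        Fintype.mem_piFinset, Finset.mem_powerset]
      constructor
      · rintro ⟨⟨hlt, hne⟩, havd⟩ i
        refine ⟨fun j hj => ?_, fun h => hne i h⟩
        rw [Finset.mem_sdiff, Finset.mem_Ioi]
        exact ⟨hlt i j hj, havd i j hj⟩
      · intro h
        refine ⟨⟨fun i j hj => ?_, fun i hi => (h i).2 hi⟩, fun i j hj => ?_⟩
        · have := (h i).1 hj
          rw [Finset.mem_sdiff, Finset.mem_Ioi] at this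
          exact this.1
        · have := (h i).1 hj
          rw [Finset.mem_sdiff] at this
          exact this.2
    rw [hpi, Fintype.card_piFinset, Nat.cast_prod]
    refine Finset.prod_congr rfl fun i _ => ?_
    by_cases hi : i = Fin.last n
    · subst hi
      rw [if_pos rfl]
      have h0 : Finset.Ioi (Fin.last n) = (∅ : Finset (Fin (n+1))) := by
        ext a
        simp only [Finset.mem_Ioi, Finset.notMem_empty, iff_false, not_lt]
        exact Fin.le_last a
      rw [h0, Finset.empty_sdiff, Finset.powerset_empty]
      rw [Finset.filter_true_of_mem (fun s _ => fun h => absurd rfl h)]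
      simp
    · rw [if_neg hi]
      have hfe : ((Finset.Ioi i \ T).powerset).filter (fun s => i ≠ Fin.last n → s.Nonempty)
          = ((Finset.Ioi i \ T).powerset).erase ∅ := by
        ext s
        simp only [Finset.mem_filter, Finset.mem_erase, Finset.mem_powerset]
        constructor
        · rintro ⟨h1, h2⟩
          exact ⟨Finset.nonempty_iff_ne_empty.mp (h2 hi), h1⟩
        · rintro ⟨h1, h2⟩
          exact ⟨h2, fun _ => Finset.nonempty_iff_ne_empty.mpr h1⟩
      rw [hfe, Finset.card_erase_of_mem (Finset.empty_mem_powerset _), Finset.card_powerset]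
      have h1 : (1:ℕ) ≤ 2 ^ (Finset.Ioi i \ T).card := Nat.one_le_two_pow
      push_cast [h1]
      ring
  rw [stepB, Finset.sum_congr rfl (fun T _ => by rw [stepC T])]
  clear stepC stepB hA A
  -- Step D : restrict to subsets of the interior
  have hsub : (Finset.Ioo (0:Fin (n+1)) (Fin.last n)).powerset ⊆ (Finset.Ioi (0:Fin (n+1))).powerset := by
    apply Finset.powerset_mono.mpr
    intro a ha
    rw [Finset.mem_Ioo] at ha
    exact Finset.mem_Ioi.mpr ha.1
  have hzero : ∀ T ∈ (Finset.Ioi (0:Fin (n+1))).powerset,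
      T ∉ (Finset.Ioo (0:Fin (n+1)) (Fin.last n)).powerset →
      (-1:ℤ)^T.card * (∏ i : Fin (n+1),
        (if i = Fin.last n then 1 else (2:ℤ)^((Finset.Ioi i \ T).card) - 1)) = 0 := by
    intro T hT hT'
    rw [Finset.mem_powerset] at hT hT'
    have hlast : Fin.last n ∈ T := by
      by_contra hc
      apply hT'
      intro a ha
      have h0 := hT ha
      rw [Finset.mem_Ioi] at h0
      rw [Finset.mem_Ioo]
      refine ⟨h0, lt_of_le_of_ne (Fin.le_last a) ?_⟩
      rintro rfl
      exact hc ha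
    have hn1 : n - 1 < n + 1 := by omega
    have hi0 : (⟨n-1, hn1⟩ : Fin (n+1)) ≠ Fin.last n := by
      intro h
      have := congrArg Fin.val h
      simp only [Fin.last] at this
      omega
    have hIoi : Finset.Ioi (⟨n-1, hn1⟩ : Fin (n+1)) \ T = ∅ := by
      rw [Finset.sdiff_eq_empty_iff_subset]
      intro a ha
      rw [Finset.mem_Ioi] at ha
      have hval : (n-1 : ℕ) < a.val := Fin.lt_def.mp ha
      have h2 : a = Fin.last n := by
        apply Fin.ext
        have := a.isLt
        simp only [Fin.val_last]
        omega
      rwa [h2]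
    apply mul_eq_zero_of_right
    apply Finset.prod_eq_zero (Finset.mem_univ (⟨n-1, hn1⟩ : Fin (n+1)))
    rw [if_neg hi0, hIoi]
    simp
  rw [← Finset.sum_subset hsub hzero]
  -- Step E : reindex to natural numbers
  have hLsum : Lsum n (fun c => (2:ℤ)^c - 1) = ∑ S ∈ (Finset.Ico 1 n).powerset,
      (-1:ℤ)^S.card * ∏ i ∈ Finset.range n,
        ((2:ℤ)^((Finset.Ico (i+1) (n+1) \ S).card) - 1) := rfl
  rw [hLsum]
  have h1 : ∀ T ∈ (Finset.Ioo (0:Fin (n+1)) (Fin.last n)).powerset,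
      T.image Fin.val ∈ (Finset.Ico 1 n).powerset := by
    intro T hT
    rw [Finset.mem_powerset] at hT ⊢
    intro a ha
    rw [Finset.mem_image] at ha
    obtain ⟨b, hb, rfl⟩ := ha
    have hbm := hT hb
    rw [Finset.mem_Ioo] at hbm
    rw [Finset.mem_Ico]
    refine ⟨Fin.lt_def.mp hbm.1, ?_⟩
    have h2 := Fin.lt_def.mp hbm.2
    simpa using h2
  have h2 : ∀ S ∈ (Finset.Ico 1 n).powerset,
      (S.filter (fun m => m < n+1)).attachFin (fun m hm => (Finset.mem_filter.mp hm).2)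
        ∈ (Finset.Ioo (0:Fin (n+1)) (Fin.last n)).powerset := by
    intro S hS
    rw [Finset.mem_powerset] at hS ⊢
    intro a ha
    rw [Finset.mem_attachFin, Finset.mem_filter] at ha
    have hm := hS ha.1
    rw [Finset.mem_Ico] at hm
    rw [Finset.mem_Ioo]
    constructor
    · rw [Fin.lt_def]
      simp only [Fin.val_zero]; omega
    · rw [Fin.lt_def]
      simpa using hm.2
  have h3 : ∀ T ∈ (Finset.Ioo (0:Fin (n+1)) (Fin.last n)).powerset,
      ((T.image Fin.val).filter (fun m => m < n+1)).attachFin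
        (fun m hm => (Finset.mem_filter.mp hm).2) = T := by
    intro T _
    ext a
    rw [Finset.mem_attachFin, Finset.mem_filter, Finset.mem_image]
    constructor
    · rintro ⟨⟨b, hb, hba⟩, _⟩
      rwa [Fin.val_injective hba] at hb
    · intro ha
      exact ⟨⟨a, ha, rfl⟩, a.isLt⟩
  have h4 : ∀ S ∈ (Finset.Ico 1 n).powerset,
      ((S.filter (fun m => m < n+1)).attachFin
        (fun m hm => (Finset.mem_filter.mp hm).2)).image Fin.val = S := by
    intro S hS
    rw [Finset.mem_powerset] at hS
    ext a
    rw [Finset.mem_image]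
    constructor
    · rintro ⟨b, hb, rfl⟩
      rw [Finset.mem_attachFin, Finset.mem_filter] at hb
      exact hb.1
    · intro ha
      have halt : a < n + 1 := by
        have := hS ha
        rw [Finset.mem_Ico] at this
        omega
      refine ⟨⟨a, halt⟩, ?_, rfl⟩
      rw [Finset.mem_attachFin, Finset.mem_filter]
      exact ⟨ha, halt⟩
  have h5 : ∀ T ∈ (Finset.Ioo (0:Fin (n+1)) (Fin.last n)).powerset,
      (-1:ℤ)^T.card * (∏ i : Fin (n+1),
        (if i = Fin.last n then 1 else (2:ℤ)^((Finset.Ioi i \ T).card) - 1))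
      = (-1:ℤ)^(T.image Fin.val).card * ∏ i ∈ Finset.range n,
          ((2:ℤ)^((Finset.Ico (i+1) (n+1) \ T.image Fin.val).card) - 1) := by
    intro T _
    rw [Finset.card_image_of_injective _ Fin.val_injective]
    congr 1
    rw [Fin.prod_univ_castSucc, if_pos rfl, mul_one]
    have hfact : ∀ i : Fin n,
        (if (Fin.castSucc i) = Fin.last n then (1:ℤ)
          else (2:ℤ)^((Finset.Ioi (Fin.castSucc i) \ T).card) - 1)
        = (fun i' : ℕ => (2:ℤ)^((Finset.Ico (i'+1) (n+1) \ T.image Fin.val).card) - 1) i.val := by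
      intro i
      rw [if_neg (ne_of_lt (Fin.castSucc_lt_last i))]
      have hIm : (Finset.Ioi (Fin.castSucc i)).image Fin.val = Finset.Ico (i.val+1) (n+1) := by
        ext a
        simp only [Finset.mem_image, Finset.mem_Ioi, Finset.mem_Ico]
        constructor
        · rintro ⟨b, hb, rfl⟩
          have hlt := Fin.lt_def.mp hb
          simp only [Fin.coe_castSucc] at hlt
          exact ⟨by omega, b.isLt⟩
        · rintro ⟨ha1, ha2⟩
          refine ⟨⟨a, ha2⟩, ?_, rfl⟩
          rw [Fin.lt_def]
          simp only [Fin.coe_castSucc]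
          omega
      have hcard : (Finset.Ioi (Fin.castSucc i) \ T).card
          = (Finset.Ico (i.val+1) (n+1) \ T.image Fin.val).card := by
        rw [← hIm, ← Finset.image_sdiff _ _ Fin.val_injective,
          Finset.card_image_of_injective _ Fin.val_injective]
      rw [hcard]
    rw [Finset.prod_congr rfl (fun i _ => hfact i)]
    exact Fin.prod_univ_eq_prod_range (fun i' => (2:ℤ)^((Finset.Ico (i'+1) (n+1) \ T.image Fin.val).card) - 1) n
  exact Finset.sum_nbij' (fun T => T.image Fin.val)
    (fun S => (S.filter (fun m => m < n+1)).attachFin (fun m hm => (Finset.mem_filter.mp hm).2))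
    h1 h2 h3 h4 h5


lemma Lsum_eq_Rsum : ∀ n, 1 ≤ n → ∀ x : ℕ → ℤ, Lsum n x = Rsum n x := by
  intro n
  induction n with
  | zero => intro h; omega
  | succ n ih =>
    intro _ x
    rcases Nat.eq_zero_or_pos n with rfl | hpos
    · rw [Lsum_one, Rsum_one]
    · rw [Lsum_rec n hpos x, Rsum_rec n hpos x, ih hpos, ih hpos]

/-- For `n ≥ 1`, the number of subgraphs `H` of the complete DAG `K_{n+1}` with vertex set
exactly `{1, …, n+1}` (every vertex incident to an edge), connected as an undirected
graph, and such that every vertex lies on a directed path from the first vertex to the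
last vertex, equals `∑_{m=0}^{n-1} (-1)^m · π_{n-m} · h_m(2^1 - 1, …, 2^{n-m} - 1)` where
`π_k = ∏_{i=1}^{k} (2^i - 1)`. -/
theorem stmt9 (n : ℕ) (hn : 1 ≤ n) :
    (Nat.card {H : Finset (Fin (n + 1) × Fin (n + 1)) //
        (∀ e ∈ H, e.1 < e.2) ∧
        (∀ v : Fin (n + 1), ∃ e ∈ H, e.1 = v ∨ e.2 = v) ∧
        (∀ u v : Fin (n + 1),
          Relation.ReflTransGen (fun a b => (a, b) ∈ H ∨ (b, a) ∈ H) u v) ∧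
        ∀ v : Fin (n + 1),
          Relation.ReflTransGen (fun u w => (u, w) ∈ H) 0 v ∧
          Relation.ReflTransGen (fun u w => (u, w) ∈ H) v (Fin.last n)} : ℤ) =
      ∑ m ∈ Finset.range n,
        (-1 : ℤ) ^ m * (∏ i ∈ Finset.Icc 1 (n - m), ((2 : ℤ) ^ i - 1)) *
          hfull (n - m) m (fun i => 2 ^ (i.val + 1) - 1) := by
  have e1 : Nat.card {H : Finset (Fin (n + 1) × Fin (n + 1)) //
        (∀ e ∈ H, e.1 < e.2) ∧
        (∀ v : Fin (n + 1), ∃ e ∈ H, e.1 = v ∨ e.2 = v) ∧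
        (∀ u v : Fin (n + 1),
          Relation.ReflTransGen (fun a b => (a, b) ∈ H ∨ (b, a) ∈ H) u v) ∧
        ∀ v : Fin (n + 1),
          Relation.ReflTransGen (fun u w => (u, w) ∈ H) 0 v ∧
          Relation.ReflTransGen (fun u w => (u, w) ∈ H) v (Fin.last n)}
      = Nat.card {H : Finset (Fin (n+1) × Fin (n+1)) //
        (∀ e ∈ H, e.1 < e.2) ∧ (∀ v : Fin (n+1), v ≠ 0 → ∃ u, (u, v) ∈ H) ∧
          (∀ v : Fin (n+1), v ≠ Fin.last n → ∃ w, (v, w) ∈ H)} :=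
    Nat.card_congr (Equiv.subtypeEquivRight (fun H => pred_iff hn H))
  rw [e1, card_HF n, card_F_eq n hn, Lsum_eq_Rsum n hn]
  rfl
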